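/- Averaging a product of Pauli conjugations over the Pauli group gives ⟨P₃ W P₃⟩_{P₃∈P_n} = (I/d)·tr(W) for any d×d matrix W; consequently the 8-point OTOC otoc₈(U) := ⟨d^{-1}tr(P̃₁P₂P₃P₄ P̃₁P₂P₄P₅ P̃₁P₂P₅P₆ P̃₁P₂P₆P₃)⟩_{P₃,P₄,P₅,P₆} equals otoc₂(P̃₁,P₂)⁴ = (d^{-1}tr(P̃₁P₂))⁴. -/

import Mathlib

open Matrix BigOperators

/-- The four single-qubit Pauli matrices I, X, Y, Z. -/
noncomputable def pauli : Fin 4 → Matrix (Fin 2) (Fin 2) ℂ :=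
  ![1, !![0, 1; 1, 0], !![0, -Complex.I; Complex.I, 0], !![1, 0; 0, -1]]

/-- The n-qubit Pauli string labelled by a : Fin n → Fin 4, acting on (ℂ²)^⊗n realized
as functions (Fin n → Fin 2) → ℂ; its (x,y) entry is the product of single-qubit entries. -/
noncomputable def PauliString (n : ℕ) (a : Fin n → Fin 4) :
    Matrix (Fin n → Fin 2) (Fin n → Fin 2) ℂ :=
  Matrix.of fun x y => ∏ j, pauli (a j) (x j) (y j)

lemma pauli_sum_entry (x x' y' y : Fin 2) :
    ∑ k : Fin 4, pauli k x x' * pauli k y' y =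
      2 * (if x = y then 1 else 0) * (if x' = y' then 1 else 0) := by
  fin_cases x <;> fin_cases x' <;> fin_cases y' <;> fin_cases y <;>
    simp [pauli, Fin.sum_univ_four, Matrix.one_apply, Complex.I_mul_I] <;> norm_num

lemma pauliString_sum_entry (n : ℕ) (x w z y : Fin n → Fin 2) :
    ∑ a : Fin n → Fin 4, PauliString n a x w * PauliString n a z y =
      2 ^ n * (if x = y then 1 else 0) * (if w = z then 1 else 0) := by
  have h1 : ∀ a : Fin n → Fin 4, PauliString n a x w * PauliString n a z y
      = ∏ j, (pauli (a j) (x j) (w j) * pauli (a j) (z j) (y j)) := by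
    intro a; simp [PauliString, Finset.prod_mul_distrib]
  simp only [h1]
  rw [← Fintype.piFinset_univ,
    Finset.sum_prod_piFinset Finset.univ (fun j k => pauli k (x j) (w j) * pauli k (z j) (y j))]
  simp only [pauli_sum_entry]
  rw [Finset.prod_mul_distrib, Finset.prod_mul_distrib, Finset.prod_const,
    Finset.prod_boole, Finset.prod_boole]
  simp [Finset.card_univ, funext_iff]

lemma depol (n : ℕ) (W : Matrix (Fin n → Fin 2) (Fin n → Fin 2) ℂ) :
    ((4 : ℂ) ^ n)⁻¹ • ∑ a : Fin n → Fin 4, PauliString n a * W * PauliString n a =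
      (Matrix.trace W / (2 : ℂ) ^ n) • (1 : Matrix (Fin n → Fin 2) (Fin n → Fin 2) ℂ) := by
  have h2 : (2 : ℂ) ^ n ≠ 0 := pow_ne_zero _ two_ne_zero
  have h4 : (4 : ℂ) ^ n = 2 ^ n * 2 ^ n := by rw [← mul_pow]; norm_num
  ext x y
  have hrw : ∀ a : Fin n → Fin 4, (PauliString n a * W * PauliString n a) x y
      = ∑ z : Fin n → Fin 2, ∑ w : Fin n → Fin 2,
          W w z * (PauliString n a x w * PauliString n a z y) := by
    intro a
    simp only [Matrix.mul_apply, Finset.sum_mul]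
    refine Finset.sum_congr rfl fun z _ => Finset.sum_congr rfl fun w _ => ?_
    ring
  have key : ∑ a : Fin n → Fin 4, (PauliString n a * W * PauliString n a) x y
      = ∑ z : Fin n → Fin 2, ∑ w : Fin n → Fin 2,
          W w z * (∑ a : Fin n → Fin 4, PauliString n a x w * PauliString n a z y) := by
    simp only [hrw]
    rw [Finset.sum_comm]
    refine Finset.sum_congr rfl fun z _ => ?_
    rw [Finset.sum_comm]
    simp only [← Finset.mul_sum]
  simp only [Matrix.smul_apply, Matrix.sum_apply, smul_eq_mul]
  rw [key]
  simp only [pauliString_sum_entry, mul_ite, ite_mul, mul_one, mul_zero, one_mul, zero_mul,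
    Finset.sum_ite_eq, Finset.sum_ite_eq', Finset.mem_univ, if_true]
  simp only [Matrix.trace, Matrix.one_apply, Matrix.diag]
  split_ifs with h
  · field_simp [h4]
    simp only [h4, ← Finset.sum_mul]; ring
  · simp

/-- Averaging Pauli conjugations over the Pauli group depolarizes:
⟨P₃ W P₃⟩_{P₃} = (I/d)·tr(W); consequently the 8-point OTOC
otoc₈(U) = ⟨d⁻¹tr(P̃₁P₂P₃P₄ P̃₁P₂P₄P₅ P̃₁P₂P₅P₆ P̃₁P₂P₆P₃)⟩_{P₃,P₄,P₅,P₆}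
equals otoc₂(P̃₁,P₂)⁴ = (d⁻¹tr(P̃₁P₂))⁴, with P̃₁ = U†P₁U. -/
theorem stmt_19 (n : ℕ) (U : Matrix (Fin n → Fin 2) (Fin n → Fin 2) ℂ)
    (hU : U ∈ Matrix.unitaryGroup (Fin n → Fin 2) ℂ)
    (a₁ a₂ : Fin n → Fin 4) :
    (∀ W : Matrix (Fin n → Fin 2) (Fin n → Fin 2) ℂ,
      ((4 : ℂ) ^ n)⁻¹ • ∑ a : Fin n → Fin 4, PauliString n a * W * PauliString n a =
        (Matrix.trace W / (2 : ℂ) ^ n) • (1 : Matrix (Fin n → Fin 2) (Fin n → Fin 2) ℂ)) ∧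
    ((((4 : ℂ) ^ n)⁻¹) ^ 4 *
        ∑ a₃ : Fin n → Fin 4, ∑ a₄ : Fin n → Fin 4, ∑ a₅ : Fin n → Fin 4, ∑ a₆ : Fin n → Fin 4,
          ((2 : ℂ) ^ n)⁻¹ * Matrix.trace
            ((Uᴴ * PauliString n a₁ * U) * PauliString n a₂ * PauliString n a₃ * PauliString n a₄ *
             (Uᴴ * PauliString n a₁ * U) * PauliString n a₂ * PauliString n a₄ * PauliString n a₅ *
             (Uᴴ * PauliString n a₁ * U) * PauliString n a₂ * PauliString n a₅ * PauliString n a₆ *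
             (Uᴴ * PauliString n a₁ * U) * PauliString n a₂ * PauliString n a₆ * PauliString n a₃) =
      (((2 : ℂ) ^ n)⁻¹ * Matrix.trace ((Uᴴ * PauliString n a₁ * U) * PauliString n a₂)) ^ 4) := by
  refine ⟨depol n, ?_⟩
  have h2 : (2 : ℂ) ^ n ≠ 0 := pow_ne_zero _ two_ne_zero
  have h4 : ((4 : ℂ) ^ n) ≠ 0 := pow_ne_zero _ (by norm_num)
  set A : Matrix (Fin n → Fin 2) (Fin n → Fin 2) ℂ :=
    (Uᴴ * PauliString n a₁ * U) * PauliString n a₂ with hA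
  have hS : (∑ a : Fin n → Fin 4, PauliString n a * A * PauliString n a)
      = ((4 : ℂ) ^ n * (Matrix.trace A / (2 : ℂ) ^ n)) •
      (1 : Matrix (Fin n → Fin 2) (Fin n → Fin 2) ℂ) := by
    have h := depol n A
    rw [inv_smul_eq_iff₀ h4, smul_smul] at h
    exact h
  have htr : ∀ a₃ a₄ a₅ a₆ : Fin n → Fin 4,
      Matrix.trace
        ((Uᴴ * PauliString n a₁ * U) * PauliString n a₂ * PauliString n a₃ * PauliString n a₄ *
         (Uᴴ * PauliString n a₁ * U) * PauliString n a₂ * PauliString n a₄ * PauliString n a₅ *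
         (Uᴴ * PauliString n a₁ * U) * PauliString n a₂ * PauliString n a₅ * PauliString n a₆ *
         (Uᴴ * PauliString n a₁ * U) * PauliString n a₂ * PauliString n a₆ * PauliString n a₃)
      = Matrix.trace ((PauliString n a₃ * A * PauliString n a₃) *
          ((PauliString n a₄ * A * PauliString n a₄) *
           ((PauliString n a₅ * A * PauliString n a₅) *
            (PauliString n a₆ * A * PauliString n a₆)))) := by
    intro a₃ a₄ a₅ a₆
    rw [Matrix.trace_mul_comm]
    simp only [hA, Matrix.mul_assoc]
  have hcard : Matrix.trace (1 : Matrix (Fin n → Fin 2) (Fin n → Fin 2) ℂ) = (2 : ℂ) ^ n := by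
    rw [Matrix.trace_one]
    simp [Fintype.card_fun]
  have hsum : (∑ a₃ : Fin n → Fin 4, ∑ a₄ : Fin n → Fin 4, ∑ a₅ : Fin n → Fin 4,
      ∑ a₆ : Fin n → Fin 4, ((2 : ℂ) ^ n)⁻¹ * Matrix.trace
        ((PauliString n a₃ * A * PauliString n a₃) *
          ((PauliString n a₄ * A * PauliString n a₄) *
           ((PauliString n a₅ * A * PauliString n a₅) *
            (PauliString n a₆ * A * PauliString n a₆)))))
      = ((2 : ℂ) ^ n)⁻¹ * Matrix.trace
          ((∑ a : Fin n → Fin 4, PauliString n a * A * PauliString n a) *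
           ((∑ a : Fin n → Fin 4, PauliString n a * A * PauliString n a) *
            ((∑ a : Fin n → Fin 4, PauliString n a * A * PauliString n a) *
             (∑ a : Fin n → Fin 4, PauliString n a * A * PauliString n a)))) := by
    simp only [← Matrix.trace_sum, ← Finset.mul_sum, ← Finset.sum_mul]
  simp only [← hA] at htr ⊢
  simp only [htr]
  rw [hsum]
  rw [hS]
  simp only [Matrix.smul_mul, Matrix.mul_smul, smul_smul, Matrix.trace_smul, smul_eq_mul,
    Matrix.one_mul, hcard]
  have h24 : (4 : ℂ) ^ n = 2 ^ n * 2 ^ n := by rw [← mul_pow]; norm_num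
  rw [h24]; field_simp
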